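/- Affine reduction →_aff on FMC terms is terminating (strongly normalizing: there is no infinite sequence of →_aff-steps) and confluent. -/

import Mathlib

variable {Loc Ch : Type}

/-- FMC terms: variable, push `[N]a.M`, pop `a<x>.M` (de Bruijn binder),
choice `i`, case `M ; i -> N`, and loop `M^i`. -/
inductive Tm (Loc Ch : Type) : Type where
  | var : ℕ → Tm Loc Ch
  | push : Tm Loc Ch → Loc → Tm Loc Ch → Tm Loc Ch
  | pop : Loc → Tm Loc Ch → Tm Loc Ch
  | choice : Ch → Tm Loc Ch
  | caseOf : Tm Loc Ch → Ch → Tm Loc Ch → Tm Loc Ch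
  | loop : Tm Loc Ch → Ch → Tm Loc Ch

namespace Tm

/-- Shift the free de Bruijn indices `≥ d` up by one. -/
def lift : Tm Loc Ch → ℕ → Tm Loc Ch
  | var n, d => if n < d then var n else var (n + 1)
  | push N a M, d => push (N.lift d) a (M.lift d)
  | pop a M, d => pop a (M.lift (d + 1))
  | choice i, _ => choice i
  | caseOf M i N, d => caseOf (M.lift d) i (N.lift d)
  | loop M i, d => loop (M.lift d) i

/-- Capture-avoiding substitution `{N/k}M` for the de Bruijn index `k`. -/
def subst : Tm Loc Ch → ℕ → Tm Loc Ch → Tm Loc Ch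
  | var n, k, N => if n = k then N else if n < k then var n else var (n - 1)
  | push P a M, k, N => push (P.subst k N) a (M.subst k N)
  | pop a M, k, N => pop a (M.subst (k + 1) (N.lift 0))
  | choice i, _, _ => choice i
  | caseOf M i P, k, N => caseOf (M.subst k N) i (P.subst k N)
  | loop M i, k, N => loop (M.subst k N) i

end Tm

/-- Affine reduction: the contextual closure of the rules passage, select,
reject, prefix(pop), prefix(push), associate. -/
inductive AffStep : Tm Loc Ch → Tm Loc Ch → Prop where
  | passage (N : Tm Loc Ch) (a b : Loc) (M : Tm Loc Ch) (h : a ≠ b) :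
      AffStep (.push N b (.pop a M)) (.pop a (.push (N.lift 0) b M))
  | select (i : Ch) (M : Tm Loc Ch) :
      AffStep (.caseOf (.choice i) i M) M
  | reject (i j : Ch) (M : Tm Loc Ch) (h : i ≠ j) :
      AffStep (.caseOf (.choice i) j M) (.choice i)
  | prefixPop (a : Loc) (N : Tm Loc Ch) (i : Ch) (M : Tm Loc Ch) :
      AffStep (.caseOf (.pop a N) i M) (.pop a (.caseOf N i (M.lift 0)))
  | prefixPush (P : Tm Loc Ch) (a : Loc) (N : Tm Loc Ch) (i : Ch) (M : Tm Loc Ch) :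
      AffStep (.caseOf (.push P a N) i M) (.push P a (.caseOf N i M))
  | assoc (P : Tm Loc Ch) (i : Ch) (N M : Tm Loc Ch) :
      AffStep (.caseOf (.caseOf P i N) i M) (.caseOf P i (.caseOf N i M))
  | push_left (N N' : Tm Loc Ch) (a : Loc) (M : Tm Loc Ch) :
      AffStep N N' → AffStep (.push N a M) (.push N' a M)
  | push_right (N : Tm Loc Ch) (a : Loc) (M M' : Tm Loc Ch) :
      AffStep M M' → AffStep (.push N a M) (.push N a M')
  | pop_body (a : Loc) (M M' : Tm Loc Ch) :
      AffStep M M' → AffStep (.pop a M) (.pop a M')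
  | case_left (M M' : Tm Loc Ch) (i : Ch) (N : Tm Loc Ch) :
      AffStep M M' → AffStep (.caseOf M i N) (.caseOf M' i N)
  | case_right (M : Tm Loc Ch) (i : Ch) (N N' : Tm Loc Ch) :
      AffStep N N' → AffStep (.caseOf M i N) (.caseOf M i N')
  | loop_body (M M' : Tm Loc Ch) (i : Ch) :
      AffStep M M' → AffStep (.loop M i) (.loop M' i)
namespace AffProof

open Tm

/-- Interaction measure. -/
def mu : Tm Loc Ch → ℕ
  | .var _ => 1
  | .choice _ => 1
  | .push N _ M => mu N + 2 * mu M + 1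
  | .pop _ M => mu M + 1
  | .caseOf M _ N => mu M * (mu N + 2)
  | .loop M _ => mu M + 1

theorem mu_pos (M : Tm Loc Ch) : 1 ≤ mu M := by
  induction M <;> simp [mu]
  all_goals nlinarith

theorem mu_lift (M : Tm Loc Ch) : ∀ d, mu (M.lift d) = mu M := by
  induction M <;> intro d <;> simp [Tm.lift, mu, *]
  split <;> simp [mu]

theorem lift_lift (M : Tm Loc Ch) : ∀ d d', d ≤ d' →
    (M.lift d).lift (d' + 1) = (M.lift d').lift d := by
  induction M with
  | var n =>
    intro d d' h
    simp only [Tm.lift]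
    rcases lt_or_ge n d with h1 | h1
    · rw [if_pos h1, if_pos (by omega : n < d')]
      simp only [Tm.lift]
      rw [if_pos (by omega : n < d' + 1), if_pos h1]
    · rw [if_neg (by omega)]
      rcases lt_or_ge n d' with h2 | h2
      · rw [if_pos h2]
        simp only [Tm.lift]
        rw [if_pos (by omega : n + 1 < d' + 1), if_neg (by omega)]
      · rw [if_neg (by omega)]
        simp only [Tm.lift]
        rw [if_neg (by omega), if_neg (by omega)]
  | push N a M ihN ihM => intro d d' h; simp [Tm.lift, ihN _ _ h, ihM _ _ h]
  | pop a M ih => intro d d' h; simp [Tm.lift, ih (d+1) (d'+1) (by omega)]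
  | choice i => intros; simp [Tm.lift]
  | caseOf M i N ih1 ih2 => intro d d' h; simp [Tm.lift, ih1 _ _ h, ih2 _ _ h]
  | loop M i ih => intro d d' h; simp [Tm.lift, ih _ _ h]

theorem step_lift {M N : Tm Loc Ch} (h : AffStep M N) :
    ∀ d, AffStep (M.lift d) (N.lift d) := by
  induction h <;> intro d <;> simp only [Tm.lift]
  case passage N a b M hne =>
    rw [lift_lift N 0 d (Nat.zero_le d)]
    exact .passage _ _ _ _ hne
  case select i M => exact .select i _
  case reject i j M hne => exact .reject i j _ hne
  case prefixPop a N i M =>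
    rw [lift_lift M 0 d (Nat.zero_le d)]
    exact .prefixPop _ _ _ _
  case prefixPush => exact .prefixPush _ _ _ _ _
  case assoc => exact .assoc _ _ _ _
  case push_left ih => exact .push_left _ _ _ _ (ih d)
  case push_right ih => exact .push_right _ _ _ _ (ih d)
  case pop_body ih => exact .pop_body _ _ _ (ih (d+1))
  case case_left ih => exact .case_left _ _ _ _ (ih d)
  case case_right ih => exact .case_right _ _ _ _ (ih d)
  case loop_body ih => exact .loop_body _ _ _ (ih d)

theorem mu_step {M N : Tm Loc Ch} (h : AffStep M N) : mu N < mu M := by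
  induction h <;> simp only [mu, mu_lift]
  case passage => omega
  case select i M => have := mu_pos M; nlinarith
  case reject i j M hne => have := mu_pos M; nlinarith
  case prefixPop a N i M => nlinarith [mu_pos N, mu_pos M]
  case prefixPush P a N i M => nlinarith [mu_pos P, mu_pos N, mu_pos M]
  case assoc P i N M => nlinarith [mu_pos P, mu_pos N, mu_pos M]
  case push_left ih => omega
  case push_right ih => omega
  case pop_body ih => omega
  case case_left M M' i N h ih => nlinarith [mu_pos N]
  case case_right M i N N' h ih => nlinarith [mu_pos M]
  case loop_body ih => omega

end AffProof
namespace AffProof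

open Tm Relation

variable {Loc Ch : Type}

abbrev rt : Tm Loc Ch → Tm Loc Ch → Prop := ReflTransGen AffStep

theorem rt_push_left {N N' : Tm Loc Ch} (a : Loc) (M : Tm Loc Ch) (h : rt N N') :
    rt (Tm.push N a M) (Tm.push N' a M) :=
  ReflTransGen.lift (fun X => Tm.push X a M) (p := AffStep) (fun _ _ h => AffStep.push_left _ _ _ _ h) _ _ h

theorem rt_push_right (N : Tm Loc Ch) (a : Loc) {M M' : Tm Loc Ch} (h : rt M M') :
    rt (Tm.push N a M) (Tm.push N a M') :=
  ReflTransGen.lift (fun X => Tm.push N a X) (p := AffStep) (fun _ _ h => AffStep.push_right _ _ _ _ h) _ _ h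

theorem rt_pop (a : Loc) {M M' : Tm Loc Ch} (h : rt M M') :
    rt (Tm.pop a M) (Tm.pop a M') :=
  ReflTransGen.lift (fun X => Tm.pop a X) (p := AffStep) (fun _ _ h => AffStep.pop_body _ _ _ h) _ _ h

theorem rt_case_left {M M' : Tm Loc Ch} (i : Ch) (N : Tm Loc Ch) (h : rt M M') :
    rt (Tm.caseOf M i N) (Tm.caseOf M' i N) :=
  ReflTransGen.lift (fun X => Tm.caseOf X i N) (p := AffStep) (fun _ _ h => AffStep.case_left _ _ _ _ h) _ _ h

theorem rt_case_right (M : Tm Loc Ch) (i : Ch) {N N' : Tm Loc Ch} (h : rt N N') :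
    rt (Tm.caseOf M i N) (Tm.caseOf M i N') :=
  ReflTransGen.lift (fun X => Tm.caseOf M i X) (p := AffStep) (fun _ _ h => AffStep.case_right _ _ _ _ h) _ _ h

theorem rt_loop {M M' : Tm Loc Ch} (i : Ch) (h : rt M M') :
    rt (Tm.loop M i) (Tm.loop M' i) :=
  ReflTransGen.lift (fun X => Tm.loop X i) (p := AffStep) (fun _ _ h => AffStep.loop_body _ _ _ h) _ _ h

/-- join -/
def J (b c : Tm Loc Ch) : Prop := ∃ d, rt b d ∧ rt c d

theorem J.symm {b c : Tm Loc Ch} (h : J b c) : J c b := by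
  obtain ⟨d, h1, h2⟩ := h; exact ⟨d, h2, h1⟩

theorem J.refl (b : Tm Loc Ch) : J b b := ⟨b, .refl, .refl⟩

theorem rt1 {a b : Tm Loc Ch} (h : AffStep a b) : rt a b := ReflTransGen.single h

theorem rt2 {a b c : Tm Loc Ch} (h : AffStep a b) (h' : AffStep b c) : rt a c :=
  (ReflTransGen.single h).tail h'

/-- Critical pair helper: step inside the scrutinee of a `prefixPop` redex. -/
theorem loc_prefixPop {a : Loc} {N : Tm Loc Ch} {i : Ch} {M X : Tm Loc Ch}
    (h : AffStep (Tm.pop a N) X) :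
    J (Tm.pop a (Tm.caseOf N i (M.lift 0))) (Tm.caseOf X i M) := by
  cases h with
  | pop_body _ _ N' h =>
    exact ⟨Tm.pop a (Tm.caseOf N' i (M.lift 0)),
      rt1 (.pop_body _ _ _ (.case_left _ _ _ _ h)), rt1 (.prefixPop _ _ _ _)⟩

/-- Critical pair helper: step inside the scrutinee of a `prefixPush` redex. -/
theorem loc_prefixPush {P : Tm Loc Ch} {a : Loc} {N : Tm Loc Ch} {i : Ch} {M X : Tm Loc Ch}
    (h : AffStep (Tm.push P a N) X) :
    J (Tm.push P a (Tm.caseOf N i M)) (Tm.caseOf X i M) := by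
  cases h with
  | passage _ c _ Q hne =>
    -- N = pop c Q, X = pop c (push (P.lift 0) a Q)
    exact ⟨Tm.pop c (Tm.push (P.lift 0) a (Tm.caseOf Q i (M.lift 0))),
      rt2 (.push_right _ _ _ _ (.prefixPop _ _ _ _)) (.passage _ _ _ _ hne),
      rt2 (.prefixPop _ _ _ _) (.pop_body _ _ _ (.prefixPush _ _ _ _ _))⟩
  | push_left _ P' _ _ h =>
    exact ⟨Tm.push P' a (Tm.caseOf N i M),
      rt1 (.push_left _ _ _ _ h), rt1 (.prefixPush _ _ _ _ _)⟩
  | push_right _ _ _ N' h =>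
    exact ⟨Tm.push P a (Tm.caseOf N' i M),
      rt1 (.push_right _ _ _ _ (.case_left _ _ _ _ h)), rt1 (.prefixPush _ _ _ _ _)⟩

/-- Critical pair helper: step inside the scrutinee of an `assoc` redex. -/
theorem loc_assoc {P : Tm Loc Ch} {i : Ch} {N M X : Tm Loc Ch}
    (h : AffStep (Tm.caseOf P i N) X) :
    J (Tm.caseOf P i (Tm.caseOf N i M)) (Tm.caseOf X i M) := by
  cases h with
  | select =>
    -- P = choice i, X = N
    exact ⟨Tm.caseOf N i M, rt1 (.select _ _), .refl⟩
  | reject k _ _ hne =>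
    -- P = choice k, k ≠ i, X = choice k
    exact ⟨Tm.choice k, rt1 (.reject _ _ _ hne), rt1 (.reject _ _ _ hne)⟩
  | prefixPop c Q =>
    -- P = pop c Q, X = pop c (caseOf Q i (N.lift 0))
    refine ⟨Tm.pop c (Tm.caseOf Q i (Tm.caseOf (N.lift 0) i (M.lift 0))), ?_, ?_⟩
    · have : (Tm.caseOf N i M).lift 0 = Tm.caseOf (N.lift 0) i (M.lift 0) := by
        simp [Tm.lift]
      exact this ▸ rt1 (.prefixPop _ _ _ _)
    · exact rt2 (.prefixPop _ _ _ _) (.pop_body _ _ _ (.assoc _ _ _ _))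
  | prefixPush P₀ c Q =>
    -- P = push P₀ c Q, X = push P₀ c (caseOf Q i N)
    exact ⟨Tm.push P₀ c (Tm.caseOf Q i (Tm.caseOf N i M)),
      rt1 (.prefixPush _ _ _ _ _),
      rt2 (.prefixPush _ _ _ _ _) (.push_right _ _ _ _ (.assoc _ _ _ _))⟩
  | assoc P₀ _ Q =>
    -- P = caseOf P₀ i Q, X = caseOf P₀ i (caseOf Q i N)
    exact ⟨Tm.caseOf P₀ i (Tm.caseOf Q i (Tm.caseOf N i M)),
      rt1 (.assoc _ _ _ _),
      rt2 (.assoc _ _ _ _) (.case_right _ _ _ _ (.assoc _ _ _ _))⟩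
  | case_left _ P' _ _ h =>
    exact ⟨Tm.caseOf P' i (Tm.caseOf N i M),
      rt1 (.case_left _ _ _ _ h), rt1 (.assoc _ _ _ _)⟩
  | case_right _ _ _ N' h =>
    exact ⟨Tm.caseOf P i (Tm.caseOf N' i M),
      rt1 (.case_right _ _ _ _ (.case_left _ _ _ _ h)), rt1 (.assoc _ _ _ _)⟩

/-- Critical pair helper: step inside the popped continuation of a `passage` redex. -/
theorem loc_passage {N : Tm Loc Ch} {a b : Loc} {M X : Tm Loc Ch} (hne : a ≠ b)
    (h : AffStep (Tm.pop a M) X) :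
    J (Tm.pop a (Tm.push (N.lift 0) b M)) (Tm.push N b X) := by
  cases h with
  | pop_body _ _ M' h =>
    exact ⟨Tm.pop a (Tm.push (N.lift 0) b M'),
      rt1 (.pop_body _ _ _ (.push_right _ _ _ _ h)), rt1 (.passage _ _ _ _ hne)⟩

end AffProof
namespace AffProof

open Tm Relation

/-- Local confluence of affine reduction. -/
theorem loc : ∀ {a b : Tm Loc Ch}, AffStep a b → ∀ {c}, AffStep a c → J b c := by
  intro a b h1
  induction h1 with
  | passage N a b M hne =>
    intro c h2
    cases h2 with
    | passage => exact J.refl _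
    | push_left _ N' _ _ h =>
      exact ⟨Tm.pop a (Tm.push (N'.lift 0) b M),
        rt1 (.pop_body _ _ _ (.push_left _ _ _ _ (step_lift h 0))),
        rt1 (.passage _ _ _ _ hne)⟩
    | push_right _ _ _ X h => exact loc_passage hne h
  | select i M =>
    intro c h2
    cases h2 with
    | select => exact J.refl _
    | reject _ _ _ hne => exact absurd rfl hne
    | case_left _ _ _ _ h => cases h
    | case_right _ _ _ N' h => exact ⟨N', rt1 h, rt1 (.select _ _)⟩
  | reject i j M hne =>
    intro c h2
    cases h2 with
    | select => exact absurd rfl hne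
    | reject => exact J.refl _
    | case_left _ _ _ _ h => cases h
    | case_right _ _ _ N' h => exact ⟨Tm.choice i, .refl, rt1 (.reject _ _ _ hne)⟩
  | prefixPop a N i M =>
    intro c h2
    cases h2 with
    | prefixPop => exact J.refl _
    | case_left _ X _ _ h => exact loc_prefixPop h
    | case_right _ _ _ M' h =>
      exact ⟨Tm.pop a (Tm.caseOf N i (M'.lift 0)),
        rt1 (.pop_body _ _ _ (.case_right _ _ _ _ (step_lift h 0))),
        rt1 (.prefixPop _ _ _ _)⟩
  | prefixPush P a N i M =>
    intro c h2
    cases h2 with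
    | prefixPush => exact J.refl _
    | case_left _ X _ _ h => exact loc_prefixPush h
    | case_right _ _ _ M' h =>
      exact ⟨Tm.push P a (Tm.caseOf N i M'),
        rt1 (.push_right _ _ _ _ (.case_right _ _ _ _ h)),
        rt1 (.prefixPush _ _ _ _ _)⟩
  | assoc P i N M =>
    intro c h2
    cases h2 with
    | assoc => exact J.refl _
    | case_left _ X _ _ h => exact loc_assoc h
    | case_right _ _ _ M' h =>
      exact ⟨Tm.caseOf P i (Tm.caseOf N i M'),
        rt1 (.case_right _ _ _ _ (.case_right _ _ _ _ h)),
        rt1 (.assoc _ _ _ _)⟩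
  | push_left N N' a M h ih =>
    intro c h2
    cases h2 with
    | passage _ c₀ _ M₀ hne =>
      exact ⟨Tm.pop c₀ (Tm.push (N'.lift 0) a M₀),
        rt1 (.passage _ _ _ _ hne),
        rt1 (.pop_body _ _ _ (.push_left _ _ _ _ (step_lift h 0)))⟩
    | push_left _ N₂ _ _ h' =>
      obtain ⟨d, hd1, hd2⟩ := ih h'
      exact ⟨Tm.push d a M, rt_push_left a M hd1, rt_push_left a M hd2⟩
    | push_right _ _ _ M' h' =>
      exact ⟨Tm.push N' a M', rt1 (.push_right _ _ _ _ h'), rt1 (.push_left _ _ _ _ h)⟩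
  | push_right N a M M' h ih =>
    intro c h2
    cases h2 with
    | passage _ c₀ _ M₀ hne => exact (loc_passage hne h).symm
    | push_left _ N' _ _ h' =>
      exact ⟨Tm.push N' a M', rt1 (.push_left _ _ _ _ h'), rt1 (.push_right _ _ _ _ h)⟩
    | push_right _ _ _ M₂ h' =>
      obtain ⟨d, hd1, hd2⟩ := ih h'
      exact ⟨Tm.push N a d, rt_push_right N a hd1, rt_push_right N a hd2⟩
  | pop_body a M M' h ih =>
    intro c h2
    cases h2 with
    | pop_body _ _ M₂ h' =>
      obtain ⟨d, hd1, hd2⟩ := ih h'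
      exact ⟨Tm.pop a d, rt_pop a hd1, rt_pop a hd2⟩
  | case_left M M' i N h ih =>
    intro c h2
    cases h2 with
    | select => cases h
    | reject => cases h
    | prefixPop => exact (loc_prefixPop h).symm
    | prefixPush => exact (loc_prefixPush h).symm
    | assoc => exact (loc_assoc h).symm
    | case_left _ M₂ _ _ h' =>
      obtain ⟨d, hd1, hd2⟩ := ih h'
      exact ⟨Tm.caseOf d i N, rt_case_left i N hd1, rt_case_left i N hd2⟩
    | case_right _ _ _ N' h' =>
      exact ⟨Tm.caseOf M' i N', rt1 (.case_right _ _ _ _ h'), rt1 (.case_left _ _ _ _ h)⟩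
  | case_right M i N N' h ih =>
    intro c h2
    cases h2 with
    | select => exact ⟨N', rt1 (.select _ _), rt1 h⟩
    | reject k _ _ hne => exact ⟨Tm.choice k, rt1 (.reject _ _ _ hne), .refl⟩
    | prefixPop c₀ Q =>
      exact ⟨Tm.pop c₀ (Tm.caseOf Q i (N'.lift 0)),
        rt1 (.prefixPop _ _ _ _),
        rt1 (.pop_body _ _ _ (.case_right _ _ _ _ (step_lift h 0)))⟩
    | prefixPush P c₀ Q =>
      exact ⟨Tm.push P c₀ (Tm.caseOf Q i N'),
        rt1 (.prefixPush _ _ _ _ _),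
        rt1 (.push_right _ _ _ _ (.case_right _ _ _ _ h))⟩
    | assoc P _ Q =>
      exact ⟨Tm.caseOf P i (Tm.caseOf Q i N'),
        rt1 (.assoc _ _ _ _),
        rt1 (.case_right _ _ _ _ (.case_right _ _ _ _ h))⟩
    | case_left _ M₂ _ _ h' =>
      exact ⟨Tm.caseOf M₂ i N', rt1 (.case_left _ _ _ _ h'), rt1 (.case_right _ _ _ _ h)⟩
    | case_right _ _ _ N₂ h' =>
      obtain ⟨d, hd1, hd2⟩ := ih h'
      exact ⟨Tm.caseOf M i d, rt_case_right M i hd1, rt_case_right M i hd2⟩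
  | loop_body M M' i h ih =>
    intro c h2
    cases h2 with
    | loop_body _ _ _ h' =>
      obtain ⟨d, hd1, hd2⟩ := ih h'
      exact ⟨Tm.loop d i, rt_loop i hd1, rt_loop i hd2⟩

/-- Newman's lemma, by induction on the measure. -/
theorem confl_aux : ∀ n (a : Tm Loc Ch), mu a ≤ n →
    ∀ b c, rt a b → rt a c → J b c := by
  intro n
  induction n using Nat.strong_induction_on with
  | _ n ih =>
    intro a ha b c hab hac
    rcases hab.cases_head with rfl | ⟨b1, hb1, hb⟩
    · exact ⟨c, hac, .refl⟩
    rcases hac.cases_head with rfl | ⟨c1, hc1, hc⟩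
    · exact ⟨b, .refl, hab⟩
    obtain ⟨d, hbd, hcd⟩ := loc hb1 hc1
    obtain ⟨e, hbe, hde⟩ :=
      ih (mu b1) (lt_of_lt_of_le (mu_step hb1) ha) b1 le_rfl b d hb hbd
    obtain ⟨f, hcf, hef⟩ :=
      ih (mu c1) (lt_of_lt_of_le (mu_step hc1) ha) c1 le_rfl c e hc (hcd.trans hde)
    exact ⟨f, hbe.trans hef, hcf⟩

end AffProof

/-- Affine reduction is terminating (strongly normalizing) and confluent. -/
theorem aff_terminating_and_confluent (Loc Ch : Type) :
    (¬ ∃ f : ℕ → Tm Loc Ch, ∀ n, AffStep (f n) (f (n + 1))) ∧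
    (∀ M N P : Tm Loc Ch, Relation.ReflTransGen AffStep M N →
      Relation.ReflTransGen AffStep M P →
      ∃ Q : Tm Loc Ch, Relation.ReflTransGen AffStep N Q ∧ Relation.ReflTransGen AffStep P Q) := by
  constructor
  · rintro ⟨f, hf⟩
    have key : ∀ n, AffProof.mu (f n) + n ≤ AffProof.mu (f 0) := by
      intro n
      induction n with
      | zero => simp
      | succ n ihn => have := AffProof.mu_step (hf n); omega
    have h1 := key (AffProof.mu (f 0))
    have h2 := AffProof.mu_pos (f (AffProof.mu (f 0)))
    omega
  · intro M N P h1 h2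
    exact AffProof.confl_aux (AffProof.mu M) M le_rfl N P h1 h2
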